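/- Let (Ω, 𝓔, ℙ) be a probability space, 1 ≤ p < ∞, and ρ : L^p(𝓔) → ℝ a convex risk measure. Then ρ has the Lebesgue property: whenever x_n → x almost surely with |x_n| ≤ y for all n for some y ∈ L^p(𝓔), one has ρ(x_n) → ρ(x). -/

import Mathlib

open MeasureTheory Filter Topology
open scoped ENNReal Topology

variable {Ω : Type*}

/-- A model space: a solid linear subspace of `L⁰(𝓔)` consisting of integrable
functions and containing the (classes of) constant functions. -/
def IsModelSpace [MeasurableSpace Ω] (P : Measure Ω) (X : Set (Ω → ℝ)) : Prop :=
  (∀ x ∈ X, Measurable x) ∧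
  (∀ x ∈ X, ∀ y ∈ X, x + y ∈ X) ∧
  (∀ c : ℝ, ∀ x ∈ X, (fun ω => c * x ω) ∈ X) ∧
  (∀ x y : Ω → ℝ, Measurable x → y ∈ X → (∀ᵐ ω ∂P, |x ω| ≤ |y ω|) → x ∈ X) ∧
  (∀ x ∈ X, Integrable x P) ∧
  (∀ c : ℝ, (fun _ => c) ∈ X)

/-- The Köthe dual `𝓧^#` of a model space. -/
def kotheDual [MeasurableSpace Ω] (P : Measure Ω) (X : Set (Ω → ℝ)) : Set (Ω → ℝ) :=
  {y | Measurable y ∧ ∀ x ∈ X, Integrable (fun ω => x ω * y ω) P}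

/-- A convex risk measure on a model space `X`. -/
def IsConvexRiskMeasure [MeasurableSpace Ω] (P : Measure Ω) (X : Set (Ω → ℝ))
    (ρ : (Ω → ℝ) → ℝ) : Prop :=
  (∀ x ∈ X, ∀ y ∈ X, ∀ r : ℝ, 0 ≤ r → r ≤ 1 →
    ρ (fun ω => r * x ω + (1 - r) * y ω) ≤ r * ρ x + (1 - r) * ρ y) ∧
  (∀ x ∈ X, ∀ y ∈ X, (∀ᵐ ω ∂P, x ω ≤ y ω) → ρ y ≤ ρ x) ∧
  (∀ x ∈ X, ∀ r : ℝ, ρ (fun ω => x ω + r) = ρ x - r)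

/-- The Fenchel transform `ρ^#(y) = sup {E[x y] - ρ(x) : x ∈ X}`, with values in
the extended reals. -/
noncomputable def fenchel [MeasurableSpace Ω] (P : Measure Ω) (X : Set (Ω → ℝ))
    (ρ : (Ω → ℝ) → ℝ) (y : Ω → ℝ) : EReal :=
  sSup ((fun x => (((∫ ω, x ω * y ω ∂P) - ρ x : ℝ) : EReal)) '' X)

/-- The Lebesgue property: dominated a.s.-convergent sequences in `X` are mapped to
convergent sequences of risk values. -/
def LebesgueProperty [MeasurableSpace Ω] (P : Measure Ω) (X : Set (Ω → ℝ))
    (ρ : (Ω → ℝ) → ℝ) : Prop :=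
  ∀ (xn : ℕ → Ω → ℝ) (x : Ω → ℝ), (∀ n, xn n ∈ X) → x ∈ X →
    (∃ y ∈ X, ∀ n, ∀ᵐ ω ∂P, |xn n ω| ≤ y ω) →
    (∀ᵐ ω ∂P, Tendsto (fun n => xn n ω) atTop (nhds (x ω))) →
    Tendsto (fun n => ρ (xn n)) atTop (nhds (ρ x))

/-- `ρ` attains its representation: for every `x ∈ 𝓧` there is `y ∈ 𝓧^#` with
`ρ(x) = E[x y] - ρ^#(y)`. -/
def AttainsRepresentation [MeasurableSpace Ω] (P : Measure Ω) (X : Set (Ω → ℝ))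
    (ρ : (Ω → ℝ) → ℝ) : Prop :=
  ∀ x ∈ X, ∃ y ∈ kotheDual P X,
    (ρ x : EReal) = (((∫ ω, x ω * y ω ∂P : ℝ)) : EReal) - fenchel P X ρ y

/-- The Lebesgue space `L^p(𝓔)` as a set of measurable functions. -/
def LpSet [MeasurableSpace Ω] (P : Measure Ω) (p : ℝ≥0∞) : Set (Ω → ℝ) :=
  {x | Measurable x ∧ MemLp x p P}

lemma locBound [MeasurableSpace Ω] (P : Measure Ω)
    (p : ℝ≥0∞) (hp : 1 ≤ p) (hp' : p ≠ ∞) (ρ : (Ω → ℝ) → ℝ)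
    (hρ : IsConvexRiskMeasure P (LpSet P p) ρ)
    (x : Ω → ℝ) (hx : x ∈ LpSet P p) :
    ∃ n : ℕ, ∀ h ∈ LpSet P p, eLpNorm h p P ≤ (2⁻¹ : ℝ≥0∞) ^ n →
      ρ (fun ω => x ω + h ω) ≤ n := by
  by_contra hcon
  push_neg at hcon
  choose f hfmem hfnorm hfbig using hcon
  have hp0 : p ≠ 0 := fun h => by simp [h] at hp
  have hq0 : 0 < p.toReal := ENNReal.toReal_pos hp0 hp'
  have hq1 : 1 ≤ p.toReal := by
    rw [← ENNReal.toReal_one]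
    exact ENNReal.toReal_mono hp' hp
  have hfmeas : ∀ k, Measurable (f k) := fun k => (hfmem k).1
  set q := p.toReal with hq
  set G : Ω → ℝ≥0∞ := fun ω => ∑' k, (‖f k ω‖₊ : ℝ≥0∞) with hGdef
  have measG : Measurable G :=
    Measurable.ennreal_tsum fun k => (hfmeas k).nnnorm.coe_nnreal_ennreal
  -- partial sums
  set S : ℕ → Ω → ℝ≥0∞ := fun N ω => ∑ k ∈ Finset.range N, (‖f k ω‖₊ : ℝ≥0∞) with hSdef
  have measS : ∀ N, Measurable (S N) := fun N =>
    Finset.measurable_sum _ fun k _ => (hfmeas k).nnnorm.coe_nnreal_ennreal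
  -- each partial sum has bounded L^q norm
  have hSnorm : ∀ N, (∫⁻ ω, S N ω ^ q ∂P) ^ (1 / q) ≤ 2 := by
    intro N
    have key : ∀ N, (∫⁻ ω, S N ω ^ q ∂P) ^ (1 / q) ≤
        ∑ k ∈ Finset.range N, (2⁻¹ : ℝ≥0∞) ^ k := by
      intro N
      induction N with
      | zero =>
        have h0 : S 0 = fun _ => 0 := by funext ω; simp [hSdef]
        rw [h0]
        simp only [ENNReal.zero_rpow_of_pos hq0, lintegral_zero,
          ENNReal.zero_rpow_of_pos (one_div_pos.mpr hq0)]
        exact zero_le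
      | succ N ih =>
        have step : (∫⁻ ω, (S N ω + (‖f N ω‖₊ : ℝ≥0∞)) ^ q ∂P) ^ (1 / q) ≤
            (∫⁻ ω, S N ω ^ q ∂P) ^ (1 / q) +
            (∫⁻ ω, ((‖f N ω‖₊ : ℝ≥0∞)) ^ q ∂P) ^ (1 / q) :=
          ENNReal.lintegral_Lp_add_le (measS N).aemeasurable
            ((hfmeas N).nnnorm.coe_nnreal_ennreal).aemeasurable hq1
        have hfN : (∫⁻ ω, ((‖f N ω‖₊ : ℝ≥0∞)) ^ q ∂P) ^ (1 / q) ≤ (2⁻¹ : ℝ≥0∞) ^ N := by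
          have := hfnorm N
          rw [eLpNorm_eq_lintegral_rpow_enorm_toReal hp0 hp'] at this
          exact this
        have hSeq : ∀ ω, S (N + 1) ω = S N ω + (‖f N ω‖₊ : ℝ≥0∞) := by
          intro ω; rw [hSdef]; simp [Finset.sum_range_succ]
        calc (∫⁻ ω, S (N+1) ω ^ q ∂P) ^ (1 / q)
            = (∫⁻ ω, (S N ω + (‖f N ω‖₊ : ℝ≥0∞)) ^ q ∂P) ^ (1 / q) := by
              simp_rw [hSeq]
          _ ≤ _ := step
          _ ≤ ∑ k ∈ Finset.range N, (2⁻¹:ℝ≥0∞) ^ k + (2⁻¹:ℝ≥0∞) ^ N := add_le_add ih hfN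
          _ = ∑ k ∈ Finset.range (N+1), (2⁻¹:ℝ≥0∞) ^ k := (Finset.sum_range_succ _ N).symm
    refine (key N).trans ?_
    calc ∑ k ∈ Finset.range N, (2⁻¹:ℝ≥0∞) ^ k ≤ ∑' k : ℕ, (2⁻¹:ℝ≥0∞) ^ k :=
          ENNReal.sum_le_tsum _
      _ = 2 := by rw [ENNReal.tsum_geometric]; norm_num
  -- integral of G^q is bounded by Fatou
  have hGint : ∫⁻ ω, G ω ^ q ∂P ≤ 2 ^ q := by
    have hS_int : ∀ N, ∫⁻ ω, S N ω ^ q ∂P ≤ 2 ^ q := by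
      intro N
      have := ENNReal.rpow_le_rpow (hSnorm N) (le_of_lt hq0)
      rwa [← ENNReal.rpow_mul, one_div, inv_mul_cancel₀ (ne_of_gt hq0),
        ENNReal.rpow_one] at this
    have hptw : ∀ ω, G ω ^ q = Filter.liminf (fun N => S N ω ^ q) atTop := by
      intro ω
      have h1 : Tendsto (fun N => S N ω) atTop (𝓝 (G ω)) := ENNReal.tendsto_nat_tsum _
      have h2 : Tendsto (fun N => S N ω ^ q) atTop (𝓝 (G ω ^ q)) :=
        (ENNReal.continuous_rpow_const.tendsto _).comp h1
      exact (h2.liminf_eq).symm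
    calc ∫⁻ ω, G ω ^ q ∂P = ∫⁻ ω, Filter.liminf (fun N => S N ω ^ q) atTop ∂P := by
          simp_rw [hptw]
      _ ≤ Filter.liminf (fun N => ∫⁻ ω, S N ω ^ q ∂P) atTop :=
          lintegral_liminf_le fun N => (measS N).pow_const q
      _ ≤ 2 ^ q := by
          refine Filter.liminf_le_of_frequently_le ?_ (by isBoundedDefault)
          exact Filter.Frequently.of_forall fun N => hS_int N
  have hGfin : ∀ᵐ ω ∂P, G ω < ∞ := by
    have h1 : ∫⁻ ω, G ω ^ q ∂P ≠ ∞ :=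
      (lt_of_le_of_lt hGint (ENNReal.rpow_lt_top_of_nonneg (le_of_lt hq0)
        (by norm_num))).ne
    filter_upwards [ae_lt_top (measG.pow_const q) h1] with ω hω
    by_contra hc
    push_neg at hc
    rw [top_le_iff.mp hc, ENNReal.top_rpow_of_pos hq0] at hω
    exact absurd hω (lt_irrefl _)
  -- the dominating function z
  set z : Ω → ℝ := fun ω => (G ω).toReal with hzdef
  have measz : Measurable z := measG.ennreal_toReal
  have hznorm : eLpNorm z p P ≤ 2 := by
    rw [eLpNorm_eq_lintegral_rpow_enorm_toReal hp0 hp']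
    have hle : ∀ ω, ((‖z ω‖₊ : ℝ≥0∞)) ^ q ≤ G ω ^ q := by
      intro ω
      refine ENNReal.rpow_le_rpow ?_ (le_of_lt hq0)
      rw [← enorm_eq_nnnorm, Real.enorm_eq_ofReal ENNReal.toReal_nonneg]
      exact ENNReal.ofReal_toReal_le
    calc (∫⁻ ω, ((‖z ω‖₊ : ℝ≥0∞)) ^ q ∂P) ^ (1/q) ≤ (∫⁻ ω, G ω ^ q ∂P) ^ (1/q) :=
          ENNReal.rpow_le_rpow (lintegral_mono hle) (by positivity)
      _ ≤ (2 ^ q) ^ (1/q) := ENNReal.rpow_le_rpow hGint (by positivity)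
      _ = 2 := by
          rw [← ENNReal.rpow_mul, mul_one_div, div_self (ne_of_gt hq0), ENNReal.rpow_one]
  have hzmem : z ∈ LpSet P p :=
    ⟨measz, measz.aestronglyMeasurable, lt_of_le_of_lt hznorm (by norm_num)⟩
  -- x - z is in Lp
  have hxzmem : (fun ω => x ω - z ω) ∈ LpSet P p :=
    ⟨hx.1.sub measz, hx.2.sub hzmem.2⟩
  -- monotonicity contradiction
  have hdom : ∀ n : ℕ, ∀ᵐ ω ∂P, x ω - z ω ≤ x ω + f n ω := by
    intro n
    filter_upwards [hGfin] with ω hω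
    have h1 : ((‖f n ω‖₊ : ℝ≥0∞)) ≤ G ω := ENNReal.le_tsum n
    have h2 : ‖f n ω‖ ≤ z ω := by
      have := ENNReal.toReal_mono hω.ne h1
      simpa using this
    have := neg_abs_le (f n ω)
    rw [Real.norm_eq_abs] at h2
    linarith
  have hbig2 : ∀ n : ℕ, (n : ℝ) ≤ ρ (fun ω => x ω - z ω) := by
    intro n
    have hmem : (fun ω => x ω + f n ω) ∈ LpSet P p :=
      ⟨hx.1.add (hfmeas n), hx.2.add (hfmem n).2⟩
    have := hρ.2.1 _ hxzmem _ hmem (hdom n)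
    linarith [hfbig n]
  obtain ⟨n, hn⟩ := exists_nat_gt (ρ (fun ω => x ω - z ω))
  exact absurd (hbig2 n) (not_le.mpr hn)

lemma contAt [MeasurableSpace Ω] (P : Measure Ω)
    (p : ℝ≥0∞) (hp : 1 ≤ p) (hp' : p ≠ ∞) (ρ : (Ω → ℝ) → ℝ)
    (hρ : IsConvexRiskMeasure P (LpSet P p) ρ)
    (x : Ω → ℝ) (hx : x ∈ LpSet P p) {ε : ℝ} (hε : 0 < ε) :
    ∃ δ : ℝ≥0∞, 0 < δ ∧ ∀ h ∈ LpSet P p, eLpNorm h p P ≤ δ →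
      |ρ (fun ω => x ω + h ω) - ρ x| ≤ ε := by
  obtain ⟨n, hn⟩ := locBound P p hp hp' ρ hρ x hx
  set M : ℝ := (n : ℝ) with hMdef
  set δ0 : ℝ≥0∞ := 2⁻¹ ^ n with hδ0def
  have hδ0pos : 0 < δ0 := ENNReal.pow_pos (by norm_num) n
  have hzero : (0 : Ω → ℝ) ∈ LpSet P p := ⟨measurable_const, MemLp.zero⟩
  have hρxM : ρ x ≤ M := by
    have h0 := hn 0 hzero (by simp [hδ0pos.le])
    have : (fun ω => x ω + (0 : Ω → ℝ) ω) = x := by funext ω; simp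
    rwa [this] at h0
  set K : ℝ := M - ρ x with hKdef
  have hK : 0 ≤ K := by simp [hKdef]; linarith
  set t : ℝ := min 1 (ε / (K + 1)) with htdef
  have ht0 : 0 < t := lt_min one_pos (div_pos hε (by linarith))
  have ht1 : t ≤ 1 := min_le_left _ _
  have ht' : t ≠ 0 := ne_of_gt ht0
  refine ⟨ENNReal.ofReal t * δ0, ?_, ?_⟩
  · exact ENNReal.mul_pos (ne_of_gt (ENNReal.ofReal_pos.mpr ht0)) (ne_of_gt hδ0pos)
  intro h hmem hnorm
  set g : Ω → ℝ := fun ω => t⁻¹ * h ω with hgdef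
  have measg : Measurable g := hmem.1.const_mul _
  have memg : MemLp g p P := hmem.2.const_mul _
  have hgnorm : eLpNorm g p P ≤ δ0 := by
    have : eLpNorm g p P = ‖(t⁻¹ : ℝ)‖₊ • eLpNorm h p P := by
      rw [show g = (t⁻¹ : ℝ) • h from rfl]
      exact eLpNorm_const_smul _ _ _ _
    rw [this, ENNReal.smul_def, smul_eq_mul, ← enorm_eq_nnnorm,
      Real.enorm_eq_ofReal (by positivity : (0:ℝ) ≤ t⁻¹)]
    calc ENNReal.ofReal t⁻¹ * eLpNorm h p P
        ≤ ENNReal.ofReal t⁻¹ * (ENNReal.ofReal t * δ0) :=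
          mul_le_mul_right hnorm _
      _ = ENNReal.ofReal (t⁻¹ * t) * δ0 := by
          rw [ENNReal.ofReal_mul (by positivity), mul_assoc]
      _ = δ0 := by rw [inv_mul_cancel₀ ht', ENNReal.ofReal_one, one_mul]
  have hXg : (fun ω => x ω + g ω) ∈ LpSet P p := ⟨hx.1.add measg, hx.2.add memg⟩
  have hρg : ρ (fun ω => x ω + g ω) ≤ M := hn g ⟨measg, memg⟩ hgnorm
  set g' : Ω → ℝ := fun ω => -g ω with hg'def
  have measg' : Measurable g' := measg.neg
  have memg' : MemLp g' p P := memg.neg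
  have hg'norm : eLpNorm g' p P ≤ δ0 := by
    have : eLpNorm g' p P = eLpNorm g p P := by
      rw [show g' = -g from rfl]; exact eLpNorm_neg g p P
    rwa [this]
  have hXg' : (fun ω => x ω + g' ω) ∈ LpSet P p := ⟨hx.1.add measg', hx.2.add memg'⟩
  have hρg' : ρ (fun ω => x ω + g' ω) ≤ M := hn g' ⟨measg', memg'⟩ hg'norm
  have hXh : (fun ω => x ω + h ω) ∈ LpSet P p := ⟨hx.1.add hmem.1, hx.2.add hmem.2⟩
  -- upper bound
  have convU := hρ.1 _ hXg _ hx t ht0.le ht1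
  have hequ : (fun ω => t * (x ω + g ω) + (1 - t) * x ω) = fun ω => x ω + h ω := by
    funext ω; simp only [hgdef]; field_simp; ring
  rw [hequ] at convU
  have hupper : ρ (fun ω => x ω + h ω) - ρ x ≤ t * K := by
    have h1 : t * ρ (fun ω => x ω + g ω) ≤ t * M :=
      mul_le_mul_of_nonneg_left hρg ht0.le
    simp only [hKdef]; nlinarith
  -- lower bound
  have h1t : (0:ℝ) < 1 + t := by linarith
  set r : ℝ := 1 / (1 + t) with hrdef
  have hr0 : 0 < r := by positivity
  have hr1 : r ≤ 1 := by rw [hrdef, div_le_one h1t]; linarith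
  have convL := hρ.1 _ hXh _ hXg' r hr0.le hr1
  have heql : (fun ω => r * (x ω + h ω) + (1 - r) * (x ω + g' ω)) = x := by
    funext ω; simp only [hrdef, hgdef, hg'def]; field_simp; ring
  rw [heql] at convL
  have hlower : ρ x - ρ (fun ω => x ω + h ω) ≤ t * K := by
    have h2 : (1 - r) * ρ (fun ω => x ω + g' ω) ≤ (1 - r) * M :=
      mul_le_mul_of_nonneg_left hρg' (by linarith)
    have h3 : ρ x ≤ r * ρ (fun ω => x ω + h ω) + (1 - r) * M := by linarith
    have h4 : (1 - r) = t * r := by rw [hrdef]; field_simp; ring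
    have h5 : r * (1 + t) = 1 := by rw [hrdef]; field_simp
    simp only [hKdef]; nlinarith
  have htK : t * K ≤ ε := by
    have h6 : t ≤ ε / (K + 1) := min_le_right _ _
    have h7 : t * (K + 1) ≤ ε := (le_div_iff₀ (by linarith)).mp h6
    nlinarith
  rw [abs_le]
  constructor <;> linarith

/-- every convex risk measure on `L^p(𝓔)`, `1 ≤ p < ∞`, has the Lebesgue
property. -/
theorem lebesgueProperty_of_Lp [MeasurableSpace Ω] (P : Measure Ω)
    [IsProbabilityMeasure P] (p : ℝ≥0∞) (hp : 1 ≤ p) (hp' : p ≠ ∞)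
    (ρ : (Ω → ℝ) → ℝ) (hρ : IsConvexRiskMeasure P (LpSet P p) ρ) :
    LebesgueProperty P (LpSet P p) ρ := by
  intro xn x hxn hx hdom htend
  obtain ⟨y, hy, hydom⟩ := hdom
  have hp0 : p ≠ 0 := fun h => by simp [h] at hp
  have hq0 : 0 < p.toReal := ENNReal.toReal_pos hp0 hp'
  set q := p.toReal with hqdef
  have hdom' : ∀ᵐ ω ∂P, ∀ n, |xn n ω| ≤ y ω := ae_all_iff.mpr hydom
  have h_x_le : ∀ᵐ ω ∂P, |x ω| ≤ y ω := by
    filter_upwards [hdom', htend] with ω hω htω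
    exact le_of_tendsto ((continuous_abs.tendsto _).comp htω)
      (Filter.Eventually.of_forall fun n => hω n)
  -- L^p convergence via dominated convergence
  set F : ℕ → Ω → ℝ≥0∞ := fun n ω => (‖xn n ω - x ω‖₊ : ℝ≥0∞) ^ q with hFdef
  have hFmeas : ∀ n, Measurable (F n) :=
    fun n => (((hxn n).1.sub hx.1).nnnorm.coe_nnreal_ennreal).pow_const q
  set bound : Ω → ℝ≥0∞ := fun ω => (‖2 * y ω‖₊ : ℝ≥0∞) ^ q with hbdef
  have hbound : ∀ n, F n ≤ᵐ[P] bound := by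
    intro n
    filter_upwards [hdom', h_x_le] with ω hω hxω
    refine ENNReal.rpow_le_rpow ?_ hq0.le
    have habs : ‖xn n ω - x ω‖ ≤ ‖2 * y ω‖ := by
      rw [Real.norm_eq_abs, Real.norm_eq_abs]
      have h1 : |xn n ω - x ω| ≤ |xn n ω| + |x ω| := abs_sub _ _
      have h2 : (2:ℝ) * y ω ≤ |2 * y ω| := le_abs_self _
      have := hω n
      linarith
    exact_mod_cast habs
  have hbound_int : ∫⁻ ω, bound ω ∂P ≠ ∞ := by
    have h2y : MemLp (fun ω => 2 * y ω) p P := hy.2.const_mul 2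
    have h2ylt : eLpNorm (fun ω => 2 * y ω) p P < ∞ := h2y.2
    rw [eLpNorm_eq_lintegral_rpow_enorm_toReal hp0 hp'] at h2ylt
    have : ∫⁻ ω, bound ω ∂P =
        ((∫⁻ ω, ((‖2 * y ω‖₊ : ℝ≥0∞)) ^ q ∂P) ^ (1/q)) ^ q := by
      rw [← ENNReal.rpow_mul, one_div, inv_mul_cancel₀ (ne_of_gt hq0), ENNReal.rpow_one]
    rw [this]
    exact (ENNReal.rpow_lt_top_of_nonneg hq0.le h2ylt.ne).ne
  have h_lim : ∀ᵐ ω ∂P, Tendsto (fun n => F n ω) atTop (𝓝 0) := by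
    filter_upwards [htend] with ω hω
    have hc : Continuous (fun a : ℝ => ((‖a‖₊ : ℝ≥0∞)) ^ q) :=
      ENNReal.continuous_rpow_const.comp (ENNReal.continuous_coe.comp continuous_nnnorm)
    have h1 : Tendsto (fun n => xn n ω - x ω) atTop (𝓝 0) := by
      simpa using hω.sub (tendsto_const_nhds : Tendsto (fun _ : ℕ => x ω) atTop (𝓝 (x ω)))
    have h2 := (hc.tendsto 0).comp h1
    simp only [nnnorm_zero, ENNReal.coe_zero, ENNReal.zero_rpow_of_pos hq0] at h2
    exact h2
  have hDCT : Tendsto (fun n => ∫⁻ ω, F n ω ∂P) atTop (𝓝 0) := by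
    have := tendsto_lintegral_of_dominated_convergence bound hFmeas hbound hbound_int h_lim
    simpa using this
  have key : Tendsto (fun n => eLpNorm (fun ω => xn n ω - x ω) p P) atTop (𝓝 0) := by
    have heq : ∀ n, eLpNorm (fun ω => xn n ω - x ω) p P = (∫⁻ ω, F n ω ∂P) ^ (1/q) :=
      fun n => eLpNorm_eq_lintegral_rpow_enorm_toReal hp0 hp'
    simp_rw [heq]
    have h3 := ((ENNReal.continuous_rpow_const (y := 1/q)).tendsto 0).comp hDCT
    rw [show (0:ℝ≥0∞) ^ (1/q) = 0 from ENNReal.zero_rpow_of_pos (one_div_pos.mpr hq0)] at h3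
    exact h3
  -- conclude via continuity of ρ at x
  rw [Metric.tendsto_atTop]
  intro ε hε
  obtain ⟨δ, hδ, hcont⟩ := contAt P p hp hp' ρ hρ x hx (half_pos hε)
  have hev : ∀ᶠ n in atTop, eLpNorm (fun ω => xn n ω - x ω) p P < δ :=
    key.eventually (gt_mem_nhds hδ)
  obtain ⟨N, hN⟩ := Filter.eventually_atTop.mp hev
  refine ⟨N, fun n hn => ?_⟩
  have hmemh : (fun ω => xn n ω - x ω) ∈ LpSet P p :=
    ⟨(hxn n).1.sub hx.1, (hxn n).2.sub hx.2⟩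
  have hb := hcont _ hmemh (le_of_lt (hN n hn))
  have heq2 : (fun ω => x ω + (xn n ω - x ω)) = xn n := by funext ω; ring
  rw [heq2] at hb
  rw [Real.dist_eq]
  calc |ρ (xn n) - ρ x| ≤ ε / 2 := hb
    _ < ε := by linarith
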